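/- arXiv:1711.01070 — 2 statements merged into one kernel-verified Lean document; each statement's English description precedes it below -/
import Mathlib

section
/- Let w : ℝ → [0,1] satisfy: w(τ) = 0 for τ ∉ [0,1], w is symmetric about 1/2 (w(τ) = w(1−τ)), w is nondecreasing on [0, 1/2], and w(τ) > 0 for all τ in some neighbourhood of 1/2. Define w_b(i) = w((i − 0.5)/b) for i = 1,…,b. Then for every fixed h ≥ 0, W_h/‖w_b‖² → 1 as b → ∞, where W_h = Σ_{i=1}^{b−h} w_b(i) w_b(i+h) and ‖w_b‖² = Σ_{i=1}^b w_b(i)². -/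
open Filter Finset

private noncomputable def Wf (w : ℝ → ℝ) (b i : ℕ) : ℝ := w (((i : ℝ) - 0.5) / (b : ℝ))

private noncomputable def Sf (w : ℝ → ℝ) (b : ℕ) : ℝ :=
  ∑ i ∈ Finset.Ioc 0 b, (Wf w b i) ^ 2

private noncomputable def Nf (w : ℝ → ℝ) (h b : ℕ) : ℝ :=
  ∑ i ∈ Finset.Ioc 0 (b - h), Wf w b i * Wf w b (i + h)

private lemma shift_sum (f : ℕ → ℝ) (l u h : ℕ) :
    ∑ i ∈ Finset.Ioc l u, f (i + h) = ∑ j ∈ Finset.Ioc (l + h) (u + h), f j := by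
  rw [← Finset.map_add_right_Ioc, Finset.sum_map]
  rfl

private lemma tau_mem {b i : ℕ} (h1 : 1 ≤ i) (h2 : 2*i ≤ b+1) :
    ((i : ℝ) - 0.5) / (b : ℝ) ∈ Set.Icc (0:ℝ) (1/2) := by
  have hb : (0:ℝ) < b := by exact_mod_cast Nat.pos_of_ne_zero (by omega)
  constructor
  · apply div_nonneg _ hb.le
    have : (1:ℝ) ≤ i := by exact_mod_cast h1
    linarith
  · rw [div_le_iff₀ hb]
    have : (2*i : ℝ) ≤ (b:ℝ) + 1 := by exact_mod_cast h2
    linarith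

section
variable (w : ℝ → ℝ)
  (hw01 : ∀ τ, w τ ∈ Set.Icc (0 : ℝ) 1)
  (hsym : ∀ τ, w τ = w (1 - τ))
  (hmono : MonotoneOn w (Set.Icc (0 : ℝ) (1 / 2)))

include hmono in
private lemma W_mono_up {b i j : ℕ} (h1 : 1 ≤ i) (hij : i ≤ j) (h2 : 2*j ≤ b+1) :
    Wf w b i ≤ Wf w b j := by
  have hb : (0:ℝ) < b := by exact_mod_cast Nat.pos_of_ne_zero (by omega)
  have hijR : (i:ℝ) ≤ j := by exact_mod_cast hij
  exact hmono (tau_mem h1 (by omega)) (tau_mem (by omega) h2) (by gcongr)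

include hmono hsym in
private lemma W_mono_down {b i j : ℕ} (h1 : b + 1 ≤ 2*i) (hij : i ≤ j) (h2 : j ≤ b) :
    Wf w b j ≤ Wf w b i := by
  have hb : (0:ℝ) < b := by exact_mod_cast Nat.pos_of_ne_zero (by omega)
  have hiR : (b:ℝ) + 1 ≤ 2*i := by exact_mod_cast h1
  have hjR : (j:ℝ) ≤ b := by exact_mod_cast h2
  have hijR : (i:ℝ) ≤ j := by exact_mod_cast hij
  unfold Wf
  rw [hsym (((j : ℝ) - 0.5) / (b : ℝ)), hsym (((i : ℝ) - 0.5) / (b : ℝ))]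
  have key : ∀ k : ℕ, (b:ℝ) + 1 ≤ 2*k → (k:ℝ) ≤ b →
      1 - ((k:ℝ) - 0.5)/b ∈ Set.Icc (0:ℝ) (1/2) := by
    intro k hk1 hk2
    constructor
    · rw [sub_nonneg, div_le_one hb]; linarith
    · rw [sub_le_iff_le_add, ← sub_le_iff_le_add', le_div_iff₀ hb]; linarith
  apply hmono (key j (by linarith) hjR) (key i hiR (by linarith))
  have : ((i:ℝ)-0.5)/b ≤ ((j:ℝ)-0.5)/b := by gcongr
  linarith

include hw01 hsym hmono in
private lemma bounds (h b : ℕ) (hb : 4*h + 8 ≤ b) :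
    Sf w b - (2*(h:ℝ)+1) ≤ Nf w h b ∧ Nf w h b ≤ Sf w b := by
  have W0 : ∀ i, 0 ≤ Wf w b i := fun i => (hw01 _).1
  have W1 : ∀ i, Wf w b i ≤ 1 := fun i => (hw01 _).2
  set M := (b+1)/2 with hM
  set K := (b+2)/2 with hK
  set a := M - h - 1 with ha
  have e1 : ∑ i ∈ Finset.Ioc 0 (b-h), (Wf w b i)^2 ≤ Sf w b := by
    apply Finset.sum_le_sum_of_subset_of_nonneg
      (Finset.Ioc_subset_Ioc le_rfl (by omega))
    intro i _ _; positivity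
  have e2 : ∑ i ∈ Finset.Ioc 0 (b-h), (Wf w b (i+h))^2 ≤ Sf w b := by
    rw [shift_sum (fun j => (Wf w b j)^2) 0 (b-h) h]
    have : b - h + h = b := by omega
    rw [this, zero_add]
    apply Finset.sum_le_sum_of_subset_of_nonneg
      (Finset.Ioc_subset_Ioc (by omega) le_rfl)
    intro i _ _; positivity
  have hup : Nf w h b ≤ Sf w b := by
    have : Nf w h b ≤ ∑ i ∈ Finset.Ioc 0 (b-h),
        ((Wf w b i)^2/2 + (Wf w b (i+h))^2/2) := by
      apply Finset.sum_le_sum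
      intro i _
      nlinarith [sq_nonneg (Wf w b i - Wf w b (i+h))]
    rw [Finset.sum_add_distrib, ← Finset.sum_div, ← Finset.sum_div] at this
    linarith
  refine ⟨?_, hup⟩
  have split1 : (∑ i ∈ Finset.Ioc 0 a, Wf w b i * Wf w b (i+h))
      + (∑ i ∈ Finset.Ioc a (K-1), Wf w b i * Wf w b (i+h))
      + (∑ i ∈ Finset.Ioc (K-1) (b-h), Wf w b i * Wf w b (i+h)) = Nf w h b := by
    rw [Finset.sum_Ioc_consecutive _ (by omega : 0 ≤ a) (by omega : a ≤ K-1),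
        Finset.sum_Ioc_consecutive _ (by omega : (0:ℕ) ≤ K-1) (by omega : K-1 ≤ b-h)]
    rfl
  have low1 : ∑ i ∈ Finset.Ioc 0 a, (Wf w b i)^2
      ≤ ∑ i ∈ Finset.Ioc 0 a, Wf w b i * Wf w b (i+h) := by
    apply Finset.sum_le_sum
    intro i hi
    rw [Finset.mem_Ioc] at hi
    have : Wf w b i ≤ Wf w b (i+h) :=
      W_mono_up w hmono (by omega) (by omega) (by omega)
    nlinarith [W0 i]
  have low2 : ∑ i ∈ Finset.Ioc (K-1) (b-h), (Wf w b (i+h))^2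
      ≤ ∑ i ∈ Finset.Ioc (K-1) (b-h), Wf w b i * Wf w b (i+h) := by
    apply Finset.sum_le_sum
    intro i hi
    rw [Finset.mem_Ioc] at hi
    have : Wf w b (i+h) ≤ Wf w b i :=
      W_mono_down w hsym hmono (by omega) (by omega) (by omega)
    nlinarith [W0 (i+h)]
  have low3 : (0:ℝ) ≤ ∑ i ∈ Finset.Ioc a (K-1), Wf w b i * Wf w b (i+h) := by
    apply Finset.sum_nonneg
    intro i _; exact mul_nonneg (W0 i) (W0 (i+h))
  have shift2 : ∑ i ∈ Finset.Ioc (K-1) (b-h), (Wf w b (i+h))^2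
      = ∑ j ∈ Finset.Ioc (K-1+h) b, (Wf w b j)^2 := by
    rw [shift_sum (fun j => (Wf w b j)^2) (K-1) (b-h) h]
    congr 1
    congr 1
    omega
  have split2 : (∑ i ∈ Finset.Ioc 0 a, (Wf w b i)^2)
      + (∑ i ∈ Finset.Ioc a (K-1+h), (Wf w b i)^2)
      + (∑ i ∈ Finset.Ioc (K-1+h) b, (Wf w b i)^2) = Sf w b := by
    rw [Finset.sum_Ioc_consecutive _ (by omega : 0 ≤ a) (by omega : a ≤ K-1+h),
        Finset.sum_Ioc_consecutive _ (by omega : (0:ℕ) ≤ K-1+h) (by omega : K-1+h ≤ b)]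
    rfl
  have mid : ∑ i ∈ Finset.Ioc a (K-1+h), (Wf w b i)^2 ≤ 2*(h:ℝ)+1 := by
    have hcard : ((Finset.Ioc a (K-1+h)).card : ℝ) ≤ 2*(h:ℝ)+1 := by
      rw [Nat.card_Ioc]
      have : K-1+h-a ≤ 2*h+1 := by omega
      exact_mod_cast le_trans (Nat.cast_le.mpr this) (by push_cast; linarith)
    calc ∑ i ∈ Finset.Ioc a (K-1+h), (Wf w b i)^2
        ≤ ∑ i ∈ Finset.Ioc a (K-1+h), (1:ℝ) := by
          apply Finset.sum_le_sum
          intro i _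
          nlinarith [W0 i, W1 i]
      _ = ((Finset.Ioc a (K-1+h)).card : ℝ) := by rw [Finset.sum_const]; simp
      _ ≤ 2*(h:ℝ)+1 := hcard
  linarith [low1, low2, low3, split1.symm ▸ le_refl (Nf w h b), shift2]

include hmono in
private lemma S_tendsto
    (hpos : ∃ ε > (0 : ℝ), ∀ τ, |τ - 1 / 2| < ε → 0 < w τ) :
    Tendsto (Sf w) atTop atTop := by
  obtain ⟨ε, hε, hp⟩ := hpos
  set ε' := min ε (1/2) with hε'def
  have hε' : 0 < ε' := lt_min hε (by norm_num)
  have hε'le : ε' ≤ 1/2 := min_le_right _ _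
  have hε'ε : ε' ≤ ε := min_le_left _ _
  set δ := w (1/2 - ε'/2) with hδdef
  have hδ : 0 < δ := by
    apply hp
    rw [show (1/2 - ε'/2 - 1/2 : ℝ) = -(ε'/2) by ring, abs_neg, abs_of_pos (by linarith)]
    linarith
  set n₀ := ⌈(4:ℝ)/ε'⌉₊ with hn₀def
  have hn₀R : (4:ℝ)/ε' ≤ n₀ := Nat.le_ceil _
  have h8 : (8:ℝ) ≤ n₀ := by
    refine le_trans ?_ hn₀R
    rw [le_div_iff₀ hε']
    linarith
  have hn₀8 : 8 ≤ n₀ := by exact_mod_cast h8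
  have hn₀pos : 0 < n₀ := by omega
  have key : ∀ b : ℕ, 1 ≤ b → δ^2 * ((b/n₀ : ℕ) : ℝ) ≤ Sf w b := by
    intro b hb1
    set c := b / n₀ with hc
    set M := (b+1)/2 with hMdef
    have hcM : c ≤ M := by
      have : b / n₀ ≤ b / 8 := Nat.div_le_div_left hn₀8 (by omega)
      omega
    have hbR : (0:ℝ) < b := by exact_mod_cast hb1
    have hcR : (c:ℝ) ≤ ε' * b / 4 := by
      calc (c:ℝ) ≤ (b:ℝ)/(n₀:ℝ) := Nat.cast_div_le
        _ ≤ (b:ℝ)/((4:ℝ)/ε') := by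
            apply div_le_div_of_nonneg_left hbR.le (by positivity) hn₀R
        _ = ε' * b / 4 := by field_simp
    have hsub : Finset.Ioc (M-c) M ⊆ Finset.Ioc 0 b :=
      Finset.Ioc_subset_Ioc (by omega) (by omega)
    have hterm : ∀ i ∈ Finset.Ioc (M-c) M, δ^2 ≤ (Wf w b i)^2 := by
      intro i hi
      rw [Finset.mem_Ioc] at hi
      have hi1 : 1 ≤ i := by omega
      have hi2 : 2*i ≤ b+1 := by omega
      have htau := tau_mem hi1 hi2
      have hlow : (1 - ε')/2 ≤ ((i:ℝ) - 0.5)/b := by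
        rw [div_le_div_iff₀ (by norm_num) hbR]
        have h2i : (2:ℝ)*i ≥ (b:ℝ) - 2*c + 2 := by
          have hi' : M - c + 1 ≤ i := by omega
          have h1 : ((M - c + 1 : ℕ):ℝ) ≤ i := by exact_mod_cast hi'
          have hMc : ((M - c + 1 : ℕ):ℝ) = (M:ℝ) - c + 1 := by
            push_cast [Nat.cast_sub hcM]; ring
          have hbM : (b:ℝ) ≤ 2*M := by exact_mod_cast (by omega : b ≤ 2*M)
          nlinarith
        nlinarith
      have hWδ : δ ≤ Wf w b i := by
        refine hmono ⟨by linarith, by linarith⟩ htau ?_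
        calc (1/2 - ε'/2 : ℝ) = (1 - ε')/2 := by ring
          _ ≤ _ := hlow
      exact pow_le_pow_left₀ hδ.le hWδ 2
    calc δ^2 * ((c : ℕ) : ℝ)
        = ∑ _i ∈ Finset.Ioc (M-c) M, δ^2 := by
          rw [Finset.sum_const, Nat.card_Ioc]
          have hMMc : M - (M - c) = c := Nat.sub_sub_self hcM
          rw [hMMc, nsmul_eq_mul]; ring
      _ ≤ ∑ i ∈ Finset.Ioc (M-c) M, (Wf w b i)^2 := Finset.sum_le_sum hterm
      _ ≤ Sf w b := by
          apply Finset.sum_le_sum_of_subset_of_nonneg hsub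
          intro i _ _; positivity
  have t1 : Tendsto (fun b : ℕ => b / n₀) atTop atTop := by
    apply tendsto_atTop_atTop.2
    intro k
    exact ⟨k * n₀, fun b hb => (Nat.le_div_iff_mul_le hn₀pos).2 hb⟩
  have t2 : Tendsto (fun b : ℕ => δ^2 * ((b/n₀ : ℕ) : ℝ)) atTop atTop :=
    (tendsto_natCast_atTop_atTop.comp t1).const_mul_atTop (by positivity)
  apply tendsto_atTop_mono' _ _ t2
  filter_upwards [eventually_ge_atTop 1] with b hb
  exact key b hb

end

theorem stmt_7 (w : ℝ → ℝ)
    (hw01 : ∀ τ, w τ ∈ Set.Icc (0 : ℝ) 1)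
    (hsupp : ∀ τ, τ ∉ Set.Icc (0 : ℝ) 1 → w τ = 0)
    (hsym : ∀ τ, w τ = w (1 - τ))
    (hmono : MonotoneOn w (Set.Icc (0 : ℝ) (1 / 2)))
    (hpos : ∃ ε > (0 : ℝ), ∀ τ, |τ - 1 / 2| < ε → 0 < w τ)
    (h : ℕ) :
    Tendsto
      (fun b : ℕ =>
        (∑ i ∈ Finset.Icc 1 (b - h),
            w (((i : ℝ) - 0.5) / (b : ℝ)) * w (((i : ℝ) + (h : ℝ) - 0.5) / (b : ℝ))) /
          ∑ i ∈ Finset.Icc 1 b, w (((i : ℝ) - 0.5) / (b : ℝ)) ^ 2)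
      atTop (nhds 1) := by
  have heq : (fun b : ℕ =>
        (∑ i ∈ Finset.Icc 1 (b - h),
            w (((i : ℝ) - 0.5) / (b : ℝ)) * w (((i : ℝ) + (h : ℝ) - 0.5) / (b : ℝ))) /
          ∑ i ∈ Finset.Icc 1 b, w (((i : ℝ) - 0.5) / (b : ℝ)) ^ 2)
      = fun b : ℕ => Nf w h b / Sf w b := by
    funext b
    have hnum : (∑ i ∈ Finset.Icc 1 (b - h),
        w (((i : ℝ) - 0.5) / (b : ℝ)) * w (((i : ℝ) + (h : ℝ) - 0.5) / (b : ℝ)))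
        = Nf w h b := by
      rw [Nf, show (1 : ℕ) = 0 + 1 from rfl, Finset.Icc_add_one_left_eq_Ioc]
      apply Finset.sum_congr rfl
      intro i _
      unfold Wf
      push_cast
      rfl
    have hden : (∑ i ∈ Finset.Icc 1 b, w (((i : ℝ) - 0.5) / (b : ℝ)) ^ 2)
        = Sf w b := by
      rw [Sf, show (1 : ℕ) = 0 + 1 from rfl, Finset.Icc_add_one_left_eq_Ioc]
      rfl
    rw [hnum, hden]
  rw [heq]
  have hS : Tendsto (Sf w) atTop atTop := S_tendsto w hmono hpos
  have hC : Tendsto (fun b : ℕ => (2*(h:ℝ)+1) / Sf w b) atTop (nhds 0) :=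
    Tendsto.div_atTop tendsto_const_nhds hS
  have hlow : Tendsto (fun b : ℕ => 1 - (2*(h:ℝ)+1) / Sf w b) atTop (nhds 1) := by
    simpa using ((tendsto_const_nhds : Tendsto (fun _ : ℕ => (1:ℝ)) atTop (nhds 1)).sub hC)
  apply tendsto_of_tendsto_of_tendsto_of_le_of_le' hlow tendsto_const_nhds
  · filter_upwards [hS.eventually_gt_atTop 0, eventually_ge_atTop (4*h+8)] with b hSb hb
    obtain ⟨h1, _⟩ := bounds w hw01 hsym hmono h b hb
    have hd : (Sf w b - (2*(h:ℝ)+1)) / Sf w b ≤ Nf w h b / Sf w b := by gcongr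
    calc (1:ℝ) - (2*(h:ℝ)+1) / Sf w b
        = (Sf w b - (2*(h:ℝ)+1)) / Sf w b := by
          rw [sub_div, div_self hSb.ne']
      _ ≤ Nf w h b / Sf w b := hd
  · filter_upwards [hS.eventually_gt_atTop 0, eventually_ge_atTop (4*h+8)] with b hSb hb
    obtain ⟨_, h2⟩ := bounds w hw01 hsym hmono h b hb
    exact (div_le_one hSb).2 h2
end

section
/- Let X_1,…,X_n be elements of a real Hilbert space H, let 1 ≤ b < n, N = n − b + 1, and define U_i = b^{−1/2}(X_i + X_{i+1} + … + X_{i+b−1}) for i = 1,…,N. Then for any y ∈ H, (1/N) Σ_{i=1}^N ⟨U_i, y⟩² = (1/N) Σ_{i=1}^n ⟨X_i,y⟩² + Σ_{h=1}^{b−1} (1 − h/b)(2/N) Σ_{i=1}^{n−h} ⟨X_i,y⟩⟨X_{i+h},y⟩ − (1/N) Σ_{s=1}^{b−1} (1 − s/b)(⟨X_s,y⟩² + ⟨X_{n−s+1},y⟩²) − (1/N) Σ_{t=1}^{b−1} Σ_{j=1}^{b−t} (1 − (j+t)/b) · 2(⟨X_j,y⟩⟨X_{j+t},y⟩ + ⟨X_{n−j+1−t},y⟩⟨X_{n−j+1},y⟩).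 -/
open Finset

def cnt (n b p q : ℕ) : ℕ :=
  ((Finset.Icc 1 (n - b + 1)).filter
    (fun i => p ∈ Finset.Icc i (i + b - 1) ∧ q ∈ Finset.Icc i (i + b - 1))).card

lemma cnt_symm (n b p q : ℕ) : cnt n b p q = cnt n b q p := by
  unfold cnt; congr 1; apply Finset.filter_congr; intro i _; simp [and_comm]

lemma cnt_off (n b p h : ℕ) (hb : 1 ≤ b) (hbn : b < n) (hp : 1 ≤ p) (hph : p + h ≤ n)
    (hh : h ≤ b - 1) :
    cnt n b p (p + h) + (b - h - p) + (p - (n - b + 1)) = b - h := by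
  unfold cnt
  have : ((Finset.Icc 1 (n - b + 1)).filter
      (fun i => p ∈ Finset.Icc i (i + b - 1) ∧ p + h ∈ Finset.Icc i (i + b - 1)))
      = Finset.Icc (max 1 (p + h + 1 - b)) (min p (n - b + 1)) := by
    ext i
    simp only [Finset.mem_filter, Finset.mem_Icc, max_le_iff, le_min_iff]
    omega
  rw [this, Nat.card_Icc]
  omega

lemma cnt_ge (n b p h : ℕ) (hh : b ≤ h) : cnt n b p (p + h) = 0 := by
  unfold cnt
  rw [Finset.card_eq_zero, Finset.filter_eq_empty_iff]
  intro i hi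
  simp only [Finset.mem_Icc] at hi ⊢
  omega

lemma cnt_off_real (n b p h : ℕ) (hb : 1 ≤ b) (hbn : b < n) (hp : 1 ≤ p) (hph : p + h ≤ n)
    (hh : h ≤ b - 1) :
    (cnt n b p (p + h) : ℝ)
      = ((b : ℝ) - h) - ((b - h - p : ℕ) : ℝ) - ((p - (n - b + 1) : ℕ) : ℝ) := by
  have h1 := cnt_off n b p h hb hbn hp hph hh
  have h2 := congrArg (fun t : ℕ => (t : ℝ)) h1
  push_cast at h2
  have h3 : ((b - h : ℕ) : ℝ) = (b : ℝ) - h := by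
    have : h ≤ b := by omega
    push_cast [this]; ring
  rw [h3] at h2
  linarith

-- key off-diagonal per-h identity
lemma offh (n b : ℕ) (hb : 1 ≤ b) (hbn : b < n) (a : ℕ → ℝ) (h : ℕ) (hh1 : 1 ≤ h)
    (hh2 : h ≤ b - 1) :
    ∑ p ∈ Icc 1 (n - h), ((cnt n b p (p + h) : ℝ) * (a p * a (p + h))
        + (cnt n b (p + h) p : ℝ) * (a (p + h) * a p))
      = ((b : ℝ) - h) * (2 * ∑ i ∈ Icc 1 (n - h), a i * a (i + h))
        - ∑ j ∈ Icc 1 (b - h), ((b : ℝ) - ((j : ℝ) + (h : ℝ)))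
            * (2 * (a j * a (j + h) + a (n + 1 - (j + h)) * a (n - j + 1))) := by
  have step : ∀ p ∈ Icc 1 (n - h),
      (cnt n b p (p + h) : ℝ) * (a p * a (p + h))
          + (cnt n b (p + h) p : ℝ) * (a (p + h) * a p)
        = ((b : ℝ) - h) * (2 * (a p * a (p + h)))
          - ((b - h - p : ℕ) : ℝ) * (2 * (a p * a (p + h)))
          - ((p - (n - b + 1) : ℕ) : ℝ) * (2 * (a p * a (p + h))) := by
    intro p hp
    simp only [mem_Icc] at hp
    rw [cnt_symm n b (p + h) p, cnt_off_real n b p h hb hbn hp.1 (by omega) hh2]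
    ring
  rw [Finset.sum_congr rfl step]
  simp only [Finset.sum_sub_distrib]
  have pull : ∑ p ∈ Icc 1 (n - h), ((b : ℝ) - h) * (2 * (a p * a (p + h)))
      = ((b : ℝ) - h) * (2 * ∑ i ∈ Icc 1 (n - h), a i * a (i + h)) := by
    rw [Finset.mul_sum, Finset.mul_sum]
  have left : ∑ p ∈ Icc 1 (n - h), ((b - h - p : ℕ) : ℝ) * (2 * (a p * a (p + h)))
      = ∑ j ∈ Icc 1 (b - h), ((b : ℝ) - ((j : ℝ) + (h : ℝ))) * (2 * (a j * a (j + h))) := by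
    rw [← Finset.sum_subset (show Icc 1 (b - h) ⊆ Icc 1 (n - h) by
      apply Finset.Icc_subset_Icc_right; omega)]
    · refine Finset.sum_congr rfl (fun j hj => ?_)
      simp only [mem_Icc] at hj
      have : ((b - h - j : ℕ) : ℝ) = (b : ℝ) - ((j : ℝ) + (h : ℝ)) := by
        have hbj : (b - h - j) + (j + h) = b := by omega
        have := congrArg (fun t : ℕ => (t : ℝ)) hbj
        push_cast at this
        linarith
      rw [this]
    · intro p hp hp'
      simp only [mem_Icc] at hp hp'
      rw [show b - h - p = 0 by omega]
      simp
  have right : ∑ p ∈ Icc 1 (n - h), ((p - (n - b + 1) : ℕ) : ℝ) * (2 * (a p * a (p + h)))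
      = ∑ j ∈ Icc 1 (b - h), ((b : ℝ) - ((j : ℝ) + (h : ℝ)))
          * (2 * (a (n + 1 - (j + h)) * a (n - j + 1))) := by
    rw [← Finset.sum_subset (show Icc (n - b + 1) (n - h) ⊆ Icc 1 (n - h) by
      intro x hx; simp only [mem_Icc] at hx ⊢; omega)]
    · refine Finset.sum_nbij' (fun p => n + 1 - h - p) (fun j => n + 1 - h - j)
        ?_ ?_ ?_ ?_ ?_
      · intro p hp; simp only [mem_Icc] at hp ⊢; omega
      · intro j hj; simp only [mem_Icc] at hj ⊢; omega
      · intro p hp; simp only [mem_Icc] at hp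
        show n + 1 - h - (n + 1 - h - p) = p
        omega
      · intro j hj; simp only [mem_Icc] at hj
        show n + 1 - h - (n + 1 - h - j) = j
        omega
      · intro p hp
        simp only [mem_Icc] at hp
        rw [show n + 1 - (n + 1 - h - p + h) = p by omega,
          show n - (n + 1 - h - p) + 1 = p + h by omega]
        have : ((p - (n - b + 1) : ℕ) : ℝ)
            = (b : ℝ) - (((n + 1 - h - p : ℕ) : ℝ) + (h : ℝ)) := by
          have hbj : (p - (n - b + 1)) + ((n + 1 - h - p) + h) = b := by omega
          have := congrArg (fun t : ℕ => (t : ℝ)) hbj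
          push_cast at this
          linarith
        rw [this]
    · intro p hp hp'
      simp only [mem_Icc] at hp hp'
      rw [show p - (n - b + 1) = 0 by omega]
      simp
  rw [pull, left, right]
  have comb : ∑ j ∈ Icc 1 (b - h), ((b : ℝ) - ((j : ℝ) + (h : ℝ)))
        * (2 * (a j * a (j + h) + a (n + 1 - (j + h)) * a (n - j + 1)))
      = ∑ j ∈ Icc 1 (b - h), ((b : ℝ) - ((j : ℝ) + (h : ℝ))) * (2 * (a j * a (j + h)))
        + ∑ j ∈ Icc 1 (b - h), ((b : ℝ) - ((j : ℝ) + (h : ℝ)))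
            * (2 * (a (n + 1 - (j + h)) * a (n - j + 1))) := by
    rw [← Finset.sum_add_distrib]
    exact Finset.sum_congr rfl (fun j _ => by ring)
  rw [comb]
  ring

lemma diag (n b : ℕ) (hb : 1 ≤ b) (hbn : b < n) (a : ℕ → ℝ) :
    ∑ p ∈ Icc 1 n, (cnt n b p p : ℝ) * (a p * a p)
      = (b : ℝ) * ∑ i ∈ Icc 1 n, a i ^ 2
        - ∑ s ∈ Icc 1 (b - 1), ((b : ℝ) - s) * a s ^ 2
        - ∑ s ∈ Icc 1 (b - 1), ((b : ℝ) - s) * a (n - s + 1) ^ 2 := by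
  have step : ∀ p ∈ Icc 1 n, (cnt n b p p : ℝ) * (a p * a p)
      = (b : ℝ) * a p ^ 2 - ((b - p : ℕ) : ℝ) * a p ^ 2
        - ((p - (n - b + 1) : ℕ) : ℝ) * a p ^ 2 := by
    intro p hp
    simp only [mem_Icc] at hp
    have h0 := cnt_off_real n b p 0 hb hbn hp.1 (by omega) (by omega)
    simp only [Nat.add_zero, Nat.cast_zero, sub_zero, Nat.sub_zero] at h0
    rw [h0]
    ring
  rw [Finset.sum_congr rfl step]
  simp only [Finset.sum_sub_distrib]
  rw [Finset.mul_sum]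
  congr 1
  · congr 1
    rw [← Finset.sum_subset (show Icc 1 (b - 1) ⊆ Icc 1 n by
      apply Finset.Icc_subset_Icc_right; omega)]
    · refine Finset.sum_congr rfl (fun s hs => ?_)
      simp only [mem_Icc] at hs
      have hc : ((b - s : ℕ) : ℝ) = (b : ℝ) - s := by
        have : s ≤ b := by omega
        push_cast [this]; ring
      rw [hc]
    · intro p hp hp'
      simp only [mem_Icc] at hp hp'
      rw [show b - p = 0 by omega]
      simp
  · rw [← Finset.sum_subset (show Icc (n - b + 2) n ⊆ Icc 1 n by
      intro x hx; simp only [mem_Icc] at hx ⊢; omega)]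
    · refine Finset.sum_nbij' (fun p => n + 1 - p) (fun s => n + 1 - s) ?_ ?_ ?_ ?_ ?_
      · intro p hp; simp only [mem_Icc] at hp ⊢; omega
      · intro s hs; simp only [mem_Icc] at hs ⊢; omega
      · intro p hp; simp only [mem_Icc] at hp
        show n + 1 - (n + 1 - p) = p
        omega
      · intro s hs; simp only [mem_Icc] at hs
        show n + 1 - (n + 1 - s) = s
        omega
      · intro p hp
        simp only [mem_Icc] at hp
        rw [show n - (n + 1 - p) + 1 = p by omega]
        have hc : ((p - (n - b + 1) : ℕ) : ℝ) = (b : ℝ) - ((n + 1 - p : ℕ) : ℝ) := by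
          have hbj : (p - (n - b + 1)) + (n + 1 - p) = b := by omega
          have := congrArg (fun t : ℕ => (t : ℝ)) hbj
          push_cast at this
          linarith
        rw [hc]
    · intro p hp hp'
      simp only [mem_Icc] at hp hp'
      rw [show p - (n - b + 1) = 0 by omega]
      simp


lemma upper (n : ℕ) (G : ℕ → ℕ → ℝ) :
    ∑ p ∈ Icc 1 n, ∑ q ∈ Icc p n, G p q
      = ∑ p ∈ Icc 1 n, G p p
        + ∑ h ∈ Icc 1 (n - 1), ∑ p ∈ Icc 1 (n - h), G p (p + h) := by
  have step : ∀ p ∈ Icc 1 n, ∑ q ∈ Icc p n, G p q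
      = G p p + ∑ h ∈ Icc 1 (n - p), G p (p + h) := by
    intro p hp
    simp only [mem_Icc] at hp
    rw [← Finset.add_sum_erase _ _ (show p ∈ Icc p n by simp [mem_Icc, hp.2])]
    congr 1
    refine Finset.sum_nbij' (fun q => q - p) (fun h => p + h) ?_ ?_ ?_ ?_ ?_
    · simp only [Finset.mem_erase, mem_Icc]; intros; omega
    · simp only [Finset.mem_erase, mem_Icc]; intros; omega
    · simp only [Finset.mem_erase, mem_Icc]; intros; omega
    · simp only [Finset.mem_erase, mem_Icc]; intros; omega
    · intro q hq
      simp only [Finset.mem_erase, mem_Icc] at hq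
      rw [show p + (q - p) = q by omega]
  rw [Finset.sum_congr rfl step, Finset.sum_add_distrib]
  congr 1
  refine Finset.sum_comm' ?_
  intro p h
  simp only [mem_Icc]
  omega

lemma square_decomp (n : ℕ) (F : ℕ → ℕ → ℝ) :
    ∑ p ∈ Icc 1 n, ∑ q ∈ Icc 1 n, F p q
      = ∑ p ∈ Icc 1 n, F p p
        + ∑ h ∈ Icc 1 (n - 1), ∑ p ∈ Icc 1 (n - h), (F p (p + h) + F (p + h) p) := by
  have lower : ∑ p ∈ Icc 1 n, ∑ q ∈ Icc 1 (p - 1), F p q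
      = ∑ h ∈ Icc 1 (n - 1), ∑ p ∈ Icc 1 (n - h), F (p + h) p := by
    have := upper n (fun p q => F q p)
    rw [show ∑ p ∈ Icc 1 n, ∑ q ∈ Icc p n, F q p
        = ∑ q ∈ Icc 1 n, ∑ p ∈ Icc 1 q, F q p from
      Finset.sum_comm' (by intro p q; simp only [mem_Icc]; omega)] at this
    have split : ∀ q ∈ Icc 1 n, ∑ p ∈ Icc 1 q, F q p
        = F q q + ∑ p ∈ Icc 1 (q - 1), F q p := by
      intro q hq
      simp only [mem_Icc] at hq
      rw [← Finset.add_sum_erase _ _ (show q ∈ Icc 1 q by simp [mem_Icc, hq.1])]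
      congr 1
      apply Finset.sum_congr _ (fun _ _ => rfl)
      ext x
      simp only [Finset.mem_erase, mem_Icc]
      omega
    rw [Finset.sum_congr rfl split, Finset.sum_add_distrib] at this
    linarith [this]
  have hsplit : ∀ p ∈ Icc 1 n, ∑ q ∈ Icc 1 n, F p q
      = ∑ q ∈ Icc 1 (p - 1), F p q + ∑ q ∈ Icc p n, F p q := by
    intro p hp
    simp only [mem_Icc] at hp
    rw [← Finset.sum_union]
    · apply Finset.sum_congr _ (fun _ _ => rfl)
      ext x
      simp only [Finset.mem_union, mem_Icc]
      omega
    · rw [Finset.disjoint_left]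
      intro x hx hx'
      simp only [mem_Icc] at hx hx'
      omega
  rw [Finset.sum_congr rfl hsplit, Finset.sum_add_distrib, lower, upper]
  have : ∑ h ∈ Icc 1 (n - 1), ∑ p ∈ Icc 1 (n - h), (F p (p + h) + F (p + h) p)
      = ∑ h ∈ Icc 1 (n - 1), ∑ p ∈ Icc 1 (n - h), F p (p + h)
        + ∑ h ∈ Icc 1 (n - 1), ∑ p ∈ Icc 1 (n - h), F (p + h) p := by
    rw [← Finset.sum_add_distrib]
    exact Finset.sum_congr rfl (fun h _ => Finset.sum_add_distrib)
  rw [this]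
  ring

lemma expand (n b : ℕ) (hb : 1 ≤ b) (hbn : b < n) (a : ℕ → ℝ) :
    ∑ i ∈ Icc 1 (n - b + 1), (∑ j ∈ Icc i (i + b - 1), a j) ^ 2
      = ∑ p ∈ Icc 1 n, ∑ q ∈ Icc 1 n, (cnt n b p q : ℝ) * (a p * a q) := by
  have hsub : ∀ i ∈ Icc 1 (n - b + 1), Icc i (i + b - 1) ⊆ Icc 1 n := by
    intro i hi
    simp only [mem_Icc] at hi
    intro j hj
    simp only [mem_Icc] at hj ⊢
    omega
  calc ∑ i ∈ Icc 1 (n - b + 1), (∑ j ∈ Icc i (i + b - 1), a j) ^ 2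
      = ∑ i ∈ Icc 1 (n - b + 1), ∑ p ∈ Icc 1 n, ∑ q ∈ Icc 1 n,
          (if p ∈ Icc i (i + b - 1) ∧ q ∈ Icc i (i + b - 1) then a p * a q else 0) := by
        refine Finset.sum_congr rfl (fun i hi => ?_)
        have h1 : ∀ f : ℕ → ℝ, ∑ j ∈ Icc i (i + b - 1), f j
            = ∑ j ∈ Icc 1 n, if j ∈ Icc i (i + b - 1) then f j else 0 := by
          intro f
          rw [Finset.sum_ite_mem, Finset.inter_eq_right.mpr (hsub i hi)]
        rw [sq, Finset.sum_mul_sum, h1]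
        refine Finset.sum_congr rfl (fun p _ => ?_)
        split_ifs with hp
        · rw [h1]
          refine Finset.sum_congr rfl (fun q _ => ?_)
          simp [hp]
        · rw [Finset.sum_eq_zero]
          intro q _
          simp [hp]
    _ = ∑ p ∈ Icc 1 n, ∑ q ∈ Icc 1 n, ∑ i ∈ Icc 1 (n - b + 1),
          (if p ∈ Icc i (i + b - 1) ∧ q ∈ Icc i (i + b - 1) then a p * a q else 0) := by
        rw [Finset.sum_comm]
        exact Finset.sum_congr rfl (fun p _ => Finset.sum_comm)
    _ = ∑ p ∈ Icc 1 n, ∑ q ∈ Icc 1 n, (cnt n b p q : ℝ) * (a p * a q) := by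
        refine Finset.sum_congr rfl (fun p _ => Finset.sum_congr rfl (fun q _ => ?_))
        rw [← Finset.sum_filter, Finset.sum_const, nsmul_eq_mul]
        rfl

lemma key (n b : ℕ) (hb : 1 ≤ b) (hbn : b < n) (a : ℕ → ℝ) :
    ∑ i ∈ Icc 1 (n - b + 1), (∑ j ∈ Icc i (i + b - 1), a j) ^ 2
      = (b : ℝ) * ∑ i ∈ Icc 1 n, a i ^ 2
        + ∑ h ∈ Icc 1 (b - 1), ((b : ℝ) - h) * (2 * ∑ i ∈ Icc 1 (n - h), a i * a (i + h))
        - ∑ s ∈ Icc 1 (b - 1), ((b : ℝ) - s) * (a s ^ 2 + a (n - s + 1) ^ 2)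
        - ∑ t ∈ Icc 1 (b - 1), ∑ j ∈ Icc 1 (b - t), ((b : ℝ) - ((j : ℝ) + (t : ℝ))) *
            (2 * (a j * a (j + t) + a (n + 1 - (j + t)) * a (n - j + 1))) := by
  rw [expand n b hb hbn a,
    square_decomp n (fun p q => (cnt n b p q : ℝ) * (a p * a q))]
  have hrange : ∑ h ∈ Icc 1 (n - 1), ∑ p ∈ Icc 1 (n - h),
        ((cnt n b p (p + h) : ℝ) * (a p * a (p + h))
          + (cnt n b (p + h) p : ℝ) * (a (p + h) * a p))
      = ∑ h ∈ Icc 1 (b - 1), ∑ p ∈ Icc 1 (n - h),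
        ((cnt n b p (p + h) : ℝ) * (a p * a (p + h))
          + (cnt n b (p + h) p : ℝ) * (a (p + h) * a p)) := by
    rw [← Finset.sum_subset (show Icc 1 (b - 1) ⊆ Icc 1 (n - 1) by
      apply Finset.Icc_subset_Icc_right; omega)]
    intro h hh hh'
    simp only [mem_Icc] at hh hh'
    apply Finset.sum_eq_zero
    intro p _
    rw [cnt_symm n b (p + h) p, cnt_ge n b p h (by omega)]
    simp
  rw [hrange]
  have hoff : ∑ h ∈ Icc 1 (b - 1), ∑ p ∈ Icc 1 (n - h),
        ((cnt n b p (p + h) : ℝ) * (a p * a (p + h))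
          + (cnt n b (p + h) p : ℝ) * (a (p + h) * a p))
      = ∑ h ∈ Icc 1 (b - 1), (((b : ℝ) - h) * (2 * ∑ i ∈ Icc 1 (n - h), a i * a (i + h))
          - ∑ j ∈ Icc 1 (b - h), ((b : ℝ) - ((j : ℝ) + (h : ℝ)))
              * (2 * (a j * a (j + h) + a (n + 1 - (j + h)) * a (n - j + 1)))) := by
    refine Finset.sum_congr rfl (fun h hh => ?_)
    simp only [mem_Icc] at hh
    exact offh n b hb hbn a h hh.1 hh.2
  rw [hoff, Finset.sum_sub_distrib, diag n b hb hbn a]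
  have bcomb : ∑ s ∈ Icc 1 (b - 1), ((b : ℝ) - s) * (a s ^ 2 + a (n - s + 1) ^ 2)
      = ∑ s ∈ Icc 1 (b - 1), ((b : ℝ) - s) * a s ^ 2
        + ∑ s ∈ Icc 1 (b - 1), ((b : ℝ) - s) * a (n - s + 1) ^ 2 := by
    rw [← Finset.sum_add_distrib]
    exact Finset.sum_congr rfl (fun s _ => by ring)
  rw [bcomb]
  ring

theorem stmt_11 {H : Type*} [NormedAddCommGroup H] [InnerProductSpace ℝ H]
    (n b N : ℕ) (hb : 1 ≤ b) (hbn : b < n) (hN : N = n - b + 1)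
    (X : ℕ → H) (y : H)
    (U : ℕ → H) (hU : ∀ i, U i = (Real.sqrt b)⁻¹ • ∑ j ∈ Finset.Icc i (i + b - 1), X j) :
    (1 / (N : ℝ)) * ∑ i ∈ Finset.Icc 1 N, (inner ℝ (U i) y : ℝ) ^ 2 =
      (1 / (N : ℝ)) * ∑ i ∈ Finset.Icc 1 n, (inner ℝ (X i) y : ℝ) ^ 2 +
        (∑ h ∈ Finset.Icc 1 (b - 1),
          (1 - (h : ℝ) / (b : ℝ)) * ((2 / (N : ℝ)) *
            ∑ i ∈ Finset.Icc 1 (n - h), (inner ℝ (X i) y : ℝ) * (inner ℝ (X (i + h)) y : ℝ))) -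
        (1 / (N : ℝ)) * ∑ s ∈ Finset.Icc 1 (b - 1),
          (1 - (s : ℝ) / (b : ℝ)) *
            ((inner ℝ (X s) y : ℝ) ^ 2 + (inner ℝ (X (n - s + 1)) y : ℝ) ^ 2) -
        (1 / (N : ℝ)) * ∑ t ∈ Finset.Icc 1 (b - 1), ∑ j ∈ Finset.Icc 1 (b - t),
          (1 - ((j : ℝ) + (t : ℝ)) / (b : ℝ)) *
            (2 * ((inner ℝ (X j) y : ℝ) * (inner ℝ (X (j + t)) y : ℝ) +
              (inner ℝ (X (n + 1 - (j + t))) y : ℝ) * (inner ℝ (X (n - j + 1)) y : ℝ))) := by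
  subst hN
  have hbR : (b : ℝ) ≠ 0 := Nat.cast_ne_zero.mpr (by omega)
  have hNR : ((n - b + 1 : ℕ) : ℝ) ≠ 0 := Nat.cast_ne_zero.mpr (by omega)
  have hcoef : ∀ x : ℝ, 1 - x / (b : ℝ) = ((b : ℝ) - x) * (b : ℝ)⁻¹ := by
    intro x
    rw [sub_mul, mul_inv_cancel₀ hbR, div_eq_mul_inv]
  have hkey := key n b hb hbn (fun i => (inner ℝ (X i) y : ℝ))
  have hUy : ∀ i, (inner ℝ (U i) y : ℝ) ^ 2
      = (b : ℝ)⁻¹ * (∑ j ∈ Finset.Icc i (i + b - 1), (inner ℝ (X j) y : ℝ)) ^ 2 := by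
    intro i
    rw [hU i, real_inner_smul_left, sum_inner, mul_pow, inv_pow,
      Real.sq_sqrt (by positivity : (0 : ℝ) ≤ ((b : ℕ) : ℝ))]
  have e2 : ∑ h ∈ Finset.Icc 1 (b - 1),
        (1 - (h : ℝ) / (b : ℝ)) * ((2 / ((n - b + 1 : ℕ) : ℝ)) *
          ∑ i ∈ Finset.Icc 1 (n - h), (inner ℝ (X i) y : ℝ) * (inner ℝ (X (i + h)) y : ℝ))
      = ((n - b + 1 : ℕ) : ℝ)⁻¹ * ((b : ℝ)⁻¹ * ∑ h ∈ Finset.Icc 1 (b - 1),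
          ((b : ℝ) - h) * (2 * ∑ i ∈ Finset.Icc 1 (n - h),
            (inner ℝ (X i) y : ℝ) * (inner ℝ (X (i + h)) y : ℝ))) := by
    simp only [Finset.mul_sum]
    refine Finset.sum_congr rfl (fun h _ => Finset.sum_congr rfl (fun i _ => ?_))
    rw [hcoef]
    ring
  have e3 : (1 / ((n - b + 1 : ℕ) : ℝ)) * ∑ s ∈ Finset.Icc 1 (b - 1),
        (1 - (s : ℝ) / (b : ℝ)) *
          ((inner ℝ (X s) y : ℝ) ^ 2 + (inner ℝ (X (n - s + 1)) y : ℝ) ^ 2)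
      = ((n - b + 1 : ℕ) : ℝ)⁻¹ * ((b : ℝ)⁻¹ * ∑ s ∈ Finset.Icc 1 (b - 1),
          ((b : ℝ) - s) *
            ((inner ℝ (X s) y : ℝ) ^ 2 + (inner ℝ (X (n - s + 1)) y : ℝ) ^ 2)) := by
    simp only [Finset.mul_sum]
    refine Finset.sum_congr rfl (fun s _ => ?_)
    rw [hcoef]
    ring
  have e4 : (1 / ((n - b + 1 : ℕ) : ℝ)) * ∑ t ∈ Finset.Icc 1 (b - 1),
        ∑ j ∈ Finset.Icc 1 (b - t),
          (1 - ((j : ℝ) + (t : ℝ)) / (b : ℝ)) *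
            (2 * ((inner ℝ (X j) y : ℝ) * (inner ℝ (X (j + t)) y : ℝ) +
              (inner ℝ (X (n + 1 - (j + t))) y : ℝ) * (inner ℝ (X (n - j + 1)) y : ℝ)))
      = ((n - b + 1 : ℕ) : ℝ)⁻¹ * ((b : ℝ)⁻¹ * ∑ t ∈ Finset.Icc 1 (b - 1),
          ∑ j ∈ Finset.Icc 1 (b - t),
            ((b : ℝ) - ((j : ℝ) + (t : ℝ))) *
              (2 * ((inner ℝ (X j) y : ℝ) * (inner ℝ (X (j + t)) y : ℝ) +
                (inner ℝ (X (n + 1 - (j + t))) y : ℝ) * (inner ℝ (X (n - j + 1)) y : ℝ)))) := by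
    simp only [Finset.mul_sum]
    refine Finset.sum_congr rfl (fun t _ => Finset.sum_congr rfl (fun j _ => ?_))
    rw [hcoef]
    ring
  rw [Finset.sum_congr rfl (fun i _ => hUy i), ← Finset.mul_sum, hkey, e2, e3, e4]
  field_simp
  ring
end
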